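/- Let B be a bimonoid in a braided monoidal category C. Then: (i) the shear morphism sh_B = (id_B ⊗ m) ∘ α ∘ (Δ ⊗ id_B) is an isomorphism if and only if the reversed shear morphism sh'_B = (m ⊗ id_B) ∘ α⁻¹ ∘ (id_B ⊗ Δ) is an isomorphism; and (ii) the coshear morphism sh^co_B = (m ⊗ id_B) ∘ α⁻¹ ∘ (id_B ⊗ β_{B,B}) ∘ α ∘ (Δ ⊗ id_B) is an isomorphism if and only if the reversed coshear morphism sh^{co'}_B = (id_B ⊗ m) ∘ α ∘ (β_{B,B} ⊗ id_B) ∘ α⁻¹ ∘ (id_B ⊗ Δ) is an isomorphism. -/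

import Mathlib

open CategoryTheory MonoidalCategory

universe v u

variable {C : Type u} [Category.{v} C] [MonoidalCategory C] [BraidedCategory C]

variable (C) in
/-- Bimonoids in `C` (the old name of Mathlib's `Bimon C`). -/
abbrev Bimon_ := Bimon C

/-- The shear morphism `(id_B ⊗ m) ∘ α ∘ (Δ ⊗ id_B) : B ⊗ B ⟶ B ⊗ B` of a bimonoid `B`. -/
noncomputable def Bimon_.shear (B : Bimon_ C) : B.X.X ⊗ B.X.X ⟶ B.X.X ⊗ B.X.X :=
  (B.comon.comul.hom ▷ B.X.X) ≫ (α_ B.X.X B.X.X B.X.X).hom ≫ (B.X.X ◁ (MonObj.mul : B.X.X ⊗ B.X.X ⟶ B.X.X))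

/-- The reversed shear morphism `(m ⊗ id_B) ∘ α⁻¹ ∘ (id_B ⊗ Δ) : B ⊗ B ⟶ B ⊗ B`. -/
noncomputable def Bimon_.shear' (B : Bimon_ C) : B.X.X ⊗ B.X.X ⟶ B.X.X ⊗ B.X.X :=
  (B.X.X ◁ B.comon.comul.hom) ≫ (α_ B.X.X B.X.X B.X.X).inv ≫ ((MonObj.mul : B.X.X ⊗ B.X.X ⟶ B.X.X) ▷ B.X.X)

/-- The coshear morphism `(m ⊗ id_B) ∘ α⁻¹ ∘ (id_B ⊗ β_{B,B}) ∘ α ∘ (Δ ⊗ id_B)`. -/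
noncomputable def Bimon_.coshear (B : Bimon_ C) : B.X.X ⊗ B.X.X ⟶ B.X.X ⊗ B.X.X :=
  (B.comon.comul.hom ▷ B.X.X) ≫ (α_ B.X.X B.X.X B.X.X).hom ≫ (B.X.X ◁ (β_ B.X.X B.X.X).hom) ≫
    (α_ B.X.X B.X.X B.X.X).inv ≫ ((MonObj.mul : B.X.X ⊗ B.X.X ⟶ B.X.X) ▷ B.X.X)

/-- The reversed coshear morphism `(id_B ⊗ m) ∘ α ∘ (β_{B,B} ⊗ id_B) ∘ α⁻¹ ∘ (id_B ⊗ Δ)`. -/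
noncomputable def Bimon_.coshear' (B : Bimon_ C) : B.X.X ⊗ B.X.X ⟶ B.X.X ⊗ B.X.X :=
  (B.X.X ◁ B.comon.comul.hom) ≫ (α_ B.X.X B.X.X B.X.X).inv ≫ ((β_ B.X.X B.X.X).hom ▷ B.X.X) ≫
    (α_ B.X.X B.X.X B.X.X).hom ≫ (B.X.X ◁ (MonObj.mul : B.X.X ⊗ B.X.X ⟶ B.X.X))


open BraidedCategory
namespace BimonShearAux
variable {C : Type u} [Category.{v} C] [MonoidalCategory C] {X : C}

section Core
variable (m : X ⊗ X ⟶ X) (u : 𝟙_ C ⟶ X) (d : X ⟶ X ⊗ X) (e : X ⟶ 𝟙_ C)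

/-- The axioms of a (not necessarily compatible) pair of a monoid and a comonoid structure. -/
structure Axioms : Prop where
  assoc : (m ▷ X) ≫ m = (α_ X X X).hom ≫ (X ◁ m) ≫ m
  one_mul : (u ▷ X) ≫ m = (λ_ X).hom
  mul_one : (X ◁ u) ≫ m = (ρ_ X).hom
  coassoc : d ≫ (X ◁ d) = d ≫ (d ▷ X) ≫ (α_ X X X).hom
  counit_comul : d ≫ (e ▷ X) = (λ_ X).inv
  comul_counit : d ≫ (X ◁ e) = (ρ_ X).inv

/-- right fusion operator attached to `f` -/
def Phi (f : X ⟶ X ⊗ X) : X ⊗ X ⟶ X ⊗ X := (f ▷ X) ≫ (α_ X X X).hom ≫ (X ◁ m)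

/-- left fusion operator attached to `f` -/
def Psi (f : X ⟶ X ⊗ X) : X ⊗ X ⟶ X ⊗ X := (X ◁ f) ≫ (α_ X X X).inv ≫ (m ▷ X)

/-- insertion of a unit on the right -/
def jr : X ⟶ X ⊗ X := (ρ_ X).inv ≫ (X ◁ u)

/-- insertion of a unit on the left -/
def jl : X ⟶ X ⊗ X := (λ_ X).inv ≫ (u ▷ X)

variable {m u d e}
variable (h : Axioms m u d e)
include h

lemma jr_Phi (f : X ⟶ X ⊗ X) : jr u ≫ Phi m f = f := by
  rw [jr, Phi, Category.assoc, whisker_exchange_assoc, ← rightUnitor_inv_naturality_assoc,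
    associator_naturality_right_assoc, ← MonoidalCategory.whiskerLeft_comp, h.mul_one]
  have : (ρ_ (X ⊗ X)).inv ≫ (α_ X X (𝟙_ C)).hom ≫ X ◁ (ρ_ X).hom = 𝟙 (X ⊗ X) := by monoidal
  rw [this, Category.comp_id]

lemma jl_Psi (f : X ⟶ X ⊗ X) : jl u ≫ Psi m f = f := by
  rw [jl, Psi, Category.assoc, ← whisker_exchange_assoc, ← leftUnitor_inv_naturality_assoc,
    associator_inv_naturality_left_assoc, ← comp_whiskerRight, h.one_mul]
  have : (λ_ (X ⊗ X)).inv ≫ (α_ (𝟙_ C) X X).inv ≫ (λ_ X).hom ▷ X = 𝟙 (X ⊗ X) := by monoidal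
  rw [this, Category.comp_id]

lemma Phi_jr : Phi m (jr u) = 𝟙 (X ⊗ X) := by
  rw [Phi, jr, comp_whiskerRight, Category.assoc, associator_naturality_middle_assoc,
    ← MonoidalCategory.whiskerLeft_comp, h.one_mul]
  monoidal

lemma Psi_jl : Psi m (jl u) = 𝟙 (X ⊗ X) := by
  rw [Psi, jl, MonoidalCategory.whiskerLeft_comp, Category.assoc,
    associator_inv_naturality_middle_assoc, ← comp_whiskerRight, h.mul_one]
  monoidal

lemma Phi_act (f : X ⟶ X ⊗ X) :
    Phi m f ▷ X ≫ (α_ X X X).hom ≫ (X ◁ m) = (α_ X X X).hom ≫ (X ◁ m) ≫ Phi m f := by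
  rw [Phi, comp_whiskerRight, comp_whiskerRight, Category.assoc, Category.assoc,
    associator_naturality_middle_assoc, ← MonoidalCategory.whiskerLeft_comp, h.assoc,
    whisker_exchange_assoc, associator_naturality_right_assoc,
    ← associator_naturality_left_assoc, MonoidalCategory.whiskerLeft_comp,
    MonoidalCategory.whiskerLeft_comp, pentagon_assoc]

lemma Psi_act (f : X ⟶ X ⊗ X) :
    X ◁ Psi m f ≫ (α_ X X X).inv ≫ (m ▷ X) = (α_ X X X).inv ≫ (m ▷ X) ≫ Psi m f := by
  have h' : (X ◁ m) ≫ m = (α_ X X X).inv ≫ (m ▷ X) ≫ m := by rw [h.assoc, Iso.inv_hom_id_assoc]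
  rw [Psi, MonoidalCategory.whiskerLeft_comp, MonoidalCategory.whiskerLeft_comp, Category.assoc,
    Category.assoc, associator_inv_naturality_middle_assoc, ← comp_whiskerRight,
    h', ← whisker_exchange_assoc, associator_inv_naturality_left_assoc,
    ← associator_inv_naturality_right_assoc, comp_whiskerRight, comp_whiskerRight,
    pentagon_inv_assoc]

lemma Phi_comp (f f' : X ⟶ X ⊗ X) : Phi m f ≫ Phi m f' = Phi m (f ≫ Phi m f') := by
  conv_rhs => rw [Phi, comp_whiskerRight, Category.assoc, Phi_act h f']
  rw [Phi]; simp only [Category.assoc]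

lemma Psi_comp (f f' : X ⟶ X ⊗ X) : Psi m f ≫ Psi m f' = Psi m (f ≫ Psi m f') := by
  conv_rhs => rw [Psi, MonoidalCategory.whiskerLeft_comp, Category.assoc, Psi_act h f']
  rw [Psi]; simp only [Category.assoc]

lemma sh_coact :
    Phi m d ≫ (d ▷ X) ≫ (α_ X X X).hom = (d ▷ X) ≫ (α_ X X X).hom ≫ X ◁ Phi m d := by
  rw [Phi, Category.assoc, Category.assoc, whisker_exchange_assoc]
  slice_lhs 4 5 => rw [associator_naturality_right]
  slice_lhs 2 3 => rw [← associator_naturality_left]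
  rw [MonoidalCategory.whiskerLeft_comp, MonoidalCategory.whiskerLeft_comp]
  slice_rhs 2 3 => rw [← associator_naturality_middle]
  slice_rhs 1 2 => rw [← comp_whiskerRight, h.coassoc]
  simp only [comp_whiskerRight, Category.assoc]
  slice_rhs 3 5 => rw [pentagon]
  simp only [Category.assoc]

lemma sh'_coact :
    Psi m d ≫ (X ◁ d) ≫ (α_ X X X).inv = (X ◁ d) ≫ (α_ X X X).inv ≫ Psi m d ▷ X := by
  rw [Psi, Category.assoc, Category.assoc, ← whisker_exchange_assoc]
  slice_lhs 4 5 => rw [associator_inv_naturality_left]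
  slice_lhs 2 3 => rw [← associator_inv_naturality_right]
  slice_lhs 1 2 => rw [← MonoidalCategory.whiskerLeft_comp, h.coassoc]
  rw [comp_whiskerRight, comp_whiskerRight]
  slice_rhs 2 3 => rw [← associator_inv_naturality_middle]
  slice_rhs 1 2 => rw [← MonoidalCategory.whiskerLeft_comp]
  simp only [MonoidalCategory.whiskerLeft_comp, Category.assoc]
  slice_lhs 4 5 => rw [← pentagon_inv]
  simp only [Category.assoc, Iso.hom_inv_id_assoc, whiskerLeft_hom_inv_assoc]

end Core

section Nat
variable (r : 𝟙_ C ⟶ X) (e : X ⟶ 𝟙_ C) (d : X ⟶ X ⊗ X)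

lemma jr_counit : (ρ_ X).inv ≫ (X ◁ r) ≫ (e ▷ X) ≫ (λ_ X).hom = e ≫ r := by
  rw [whisker_exchange_assoc, ← rightUnitor_inv_naturality_assoc,
    leftUnitor_naturality, ← unitors_inv_equal, Iso.inv_hom_id_assoc]

lemma jl_counit : (λ_ X).inv ≫ (r ▷ X) ≫ (X ◁ e) ≫ (ρ_ X).hom = e ≫ r := by
  rw [← whisker_exchange_assoc, ← leftUnitor_inv_naturality_assoc,
    rightUnitor_naturality, unitors_inv_equal, Iso.inv_hom_id_assoc]

lemma jr_coact : (ρ_ X).inv ≫ (X ◁ r) ≫ (d ▷ X) ≫ (α_ X X X).hom = d ≫ (X ◁ jr r) := by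
  have hs : (ρ_ (X ⊗ X)).inv ≫ (α_ X X (𝟙_ C)).hom = X ◁ (ρ_ X).inv := by monoidal
  rw [jr, whisker_exchange_assoc, ← rightUnitor_inv_naturality_assoc,
    associator_naturality_right, reassoc_of% hs, ← MonoidalCategory.whiskerLeft_comp]

lemma jl_coact : (λ_ X).inv ≫ (r ▷ X) ≫ (X ◁ d) ≫ (α_ X X X).inv = d ≫ (jl r ▷ X) := by
  have hs : (λ_ (X ⊗ X)).inv ≫ (α_ (𝟙_ C) X X).inv = (λ_ X).inv ▷ X := by monoidal
  rw [jl, ← whisker_exchange_assoc, ← leftUnitor_inv_naturality_assoc,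
    associator_inv_naturality_left, reassoc_of% hs, ← comp_whiskerRight]

lemma jr_counit' : jr r ≫ (e ▷ X) ≫ (λ_ X).hom = e ≫ r := by
  conv_lhs => rw [jr]
  simp only [Category.assoc]
  exact jr_counit r e

lemma jl_counit' : jl r ≫ (X ◁ e) ≫ (ρ_ X).hom = e ≫ r := by
  conv_lhs => rw [jl]
  simp only [Category.assoc]
  exact jl_counit r e

lemma jr_coact' : jr r ≫ (d ▷ X) ≫ (α_ X X X).hom = d ≫ (X ◁ jr r) := by
  conv_lhs => rw [jr]
  simp only [Category.assoc]
  exact jr_coact r d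

lemma jl_coact' : jl r ≫ (X ◁ d) ≫ (α_ X X X).inv = d ≫ (jl r ▷ X) := by
  conv_lhs => rw [jl]
  simp only [Category.assoc]
  exact jl_coact r d

end Nat

section Main
variable {m : X ⊗ X ⟶ X} {u : 𝟙_ C ⟶ X} {d : X ⟶ X ⊗ X} {e : X ⟶ 𝟙_ C}
variable (h : Axioms m u d e)
include h

lemma ext_right {t : X ⟶ X} {r : 𝟙_ C ⟶ X}
    (w : d ≫ (X ◁ t) = (ρ_ X).inv ≫ (X ◁ r)) : t = e ≫ r := by
  have L : d ≫ (X ◁ t) ≫ (e ▷ X) ≫ (λ_ X).hom = t := by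
    rw [whisker_exchange_assoc, leftUnitor_naturality, reassoc_of% h.counit_comul,
      Iso.inv_hom_id_assoc]
  rw [← L, reassoc_of% w, jr_counit]

lemma ext_left {t : X ⟶ X} {r : 𝟙_ C ⟶ X}
    (w : d ≫ (t ▷ X) = (λ_ X).inv ≫ (r ▷ X)) : t = e ≫ r := by
  have L : d ≫ (t ▷ X) ≫ (X ◁ e) ≫ (ρ_ X).hom = t := by
    rw [← whisker_exchange_assoc, rightUnitor_naturality, reassoc_of% h.comul_counit,
      Iso.inv_hom_id_assoc]
  rw [← L, reassoc_of% w, jl_counit]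

lemma counit_kill_right : (d ▷ X) ≫ (α_ X X X).hom ≫ X ◁ (e ▷ X) ≫ X ◁ (λ_ X).hom
    = 𝟙 (X ⊗ X) := by
  have hs : (ρ_ X).inv ▷ X ≫ (α_ X (𝟙_ C) X).hom ≫ X ◁ (λ_ X).hom = 𝟙 (X ⊗ X) := by monoidal
  rw [← associator_naturality_middle_assoc, ← comp_whiskerRight_assoc, h.comul_counit, hs]

lemma counit_kill_left : (X ◁ d) ≫ (α_ X X X).inv ≫ (X ◁ e) ▷ X ≫ (ρ_ X).hom ▷ X
    = 𝟙 (X ⊗ X) := by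
  have hs : X ◁ (λ_ X).inv ≫ (α_ X (𝟙_ C) X).inv ≫ (ρ_ X).hom ▷ X = 𝟙 (X ⊗ X) := by monoidal
  rw [← associator_inv_naturality_middle_assoc, ← MonoidalCategory.whiskerLeft_comp_assoc,
    h.counit_comul, hs]

lemma clm_right (S : X ⟶ X) :
    d ≫ Phi m (d ≫ (X ◁ S)) ≫ (e ▷ X) ≫ (λ_ X).hom = d ≫ (S ▷ X) ≫ m := by
  have hs : (λ_ X).inv ▷ X ≫ (α_ (𝟙_ C) X X).hom ≫ (λ_ (X ⊗ X)).hom = 𝟙 (X ⊗ X) := by monoidal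
  rw [Phi, comp_whiskerRight]
  slice_lhs 3 4 => rw [associator_naturality_middle]
  simp only [Category.assoc]
  rw [← MonoidalCategory.whiskerLeft_comp_assoc, whisker_exchange_assoc, leftUnitor_naturality]
  slice_lhs 3 4 => rw [← associator_naturality_left]
  slice_lhs 2 3 => rw [← comp_whiskerRight, h.counit_comul]
  simp only [Category.assoc]
  rw [reassoc_of% hs]

lemma clm_left (S : X ⟶ X) :
    d ≫ Psi m (d ≫ (S ▷ X)) ≫ (X ◁ e) ≫ (ρ_ X).hom = d ≫ (X ◁ S) ≫ m := by
  have hs : X ◁ (ρ_ X).inv ≫ (α_ X X (𝟙_ C)).inv ≫ (ρ_ (X ⊗ X)).hom = 𝟙 (X ⊗ X) := by monoidal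
  rw [Psi, MonoidalCategory.whiskerLeft_comp]
  slice_lhs 3 4 => rw [associator_inv_naturality_middle]
  simp only [Category.assoc]
  rw [← comp_whiskerRight_assoc, ← whisker_exchange_assoc, rightUnitor_naturality]
  slice_lhs 3 4 => rw [← associator_inv_naturality_right]
  slice_lhs 2 3 => rw [← MonoidalCategory.whiskerLeft_comp, h.comul_counit]
  simp only [Category.assoc]
  rw [reassoc_of% hs]


lemma exists_antipode_right (hi : IsIso (Phi m d)) :
    ∃ S : X ⟶ X, d ≫ (S ▷ X) ≫ m = e ≫ u ∧ d ≫ (X ◁ S) ≫ m = e ≫ u := by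
  set G := inv (Phi m d) with hGdef
  have act_inv : G ▷ X ≫ (α_ X X X).hom ≫ (X ◁ m) = (α_ X X X).hom ≫ (X ◁ m) ≫ G := by
    rw [← cancel_mono (Phi m d)]
    simp only [Category.assoc]
    rw [← Phi_act h d, ← comp_whiskerRight_assoc, IsIso.inv_hom_id, id_whiskerRight,
      Category.id_comp, Category.comp_id]
  have coact_inv : G ≫ (d ▷ X) ≫ (α_ X X X).hom = (d ▷ X) ≫ (α_ X X X).hom ≫ X ◁ G := by
    rw [← cancel_epi (Phi m d), IsIso.hom_inv_id_assoc, reassoc_of% (sh_coact h),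
      ← MonoidalCategory.whiskerLeft_comp, IsIso.hom_inv_id, MonoidalCategory.whiskerLeft_id,
      Category.comp_id]
  have PhiG : ∀ f : X ⟶ X ⊗ X, Phi m (f ≫ G) = Phi m f ≫ G := by
    intro f
    rw [Phi, Phi, comp_whiskerRight, Category.assoc, act_inv]
    simp only [Category.assoc]
  have P3 : Phi m (jr u ≫ G) = G := by rw [PhiG, Phi_jr h, Category.id_comp]
  have P1 : d ≫ G = jr u := by
    conv_lhs => rw [← jr_Phi h d]
    rw [Category.assoc, IsIso.hom_inv_id, Category.comp_id]
  have P2 : (jr u ≫ G) ≫ Phi m d = jr u := by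
    rw [Category.assoc, IsIso.inv_hom_id, Category.comp_id]
  have P4 : (jr u ≫ G) ≫ (d ▷ X) ≫ (α_ X X X).hom = d ≫ X ◁ (jr u ≫ G) := by
    rw [Category.assoc, coact_inv, reassoc_of% (jr_coact' u d),
      ← MonoidalCategory.whiskerLeft_comp]
  refine ⟨(jr u ≫ G) ≫ (e ▷ X) ≫ (λ_ X).hom, ?_, ?_⟩
  · have E6 : jr u ≫ G = d ≫ (X ◁ ((jr u ≫ G) ≫ (e ▷ X) ≫ (λ_ X).hom)) := by
      conv_lhs => rw [← Category.comp_id (jr u ≫ G), ← counit_kill_right h]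
      simp only [Category.assoc]
      rw [reassoc_of% P4, ← MonoidalCategory.whiskerLeft_comp,
        ← MonoidalCategory.whiskerLeft_comp]
      simp only [Category.assoc]
    have c := clm_right h ((jr u ≫ G) ≫ (e ▷ X) ≫ (λ_ X).hom)
    rw [← E6, P3] at c
    rw [reassoc_of% P1, jr_counit'] at c
    exact c.symm
  · have E6 : jr u ≫ G = d ≫ (X ◁ ((jr u ≫ G) ≫ (e ▷ X) ≫ (λ_ X).hom)) := by
      conv_lhs => rw [← Category.comp_id (jr u ≫ G), ← counit_kill_right h]
      simp only [Category.assoc]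
      rw [reassoc_of% P4, ← MonoidalCategory.whiskerLeft_comp,
        ← MonoidalCategory.whiskerLeft_comp]
      simp only [Category.assoc]
    have key : d ≫ X ◁ ((jr u ≫ G) ≫ m) = (ρ_ X).inv ≫ (X ◁ u) := by
      rw [MonoidalCategory.whiskerLeft_comp, ← Category.assoc, ← P4]
      simp only [Category.assoc]
      have : (d ▷ X) ≫ (α_ X X X).hom ≫ (X ◁ m) = Phi m d := rfl
      rw [this, ← Category.assoc, P2, jr]
    have E5 : (jr u ≫ G) ≫ m = e ≫ u := ext_right h key
    rw [← Category.assoc, ← E6]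
    exact E5

lemma exists_antipode_left (hi : IsIso (Psi m d)) :
    ∃ S : X ⟶ X, d ≫ (S ▷ X) ≫ m = e ≫ u ∧ d ≫ (X ◁ S) ≫ m = e ≫ u := by
  set G := inv (Psi m d) with hGdef
  have act_inv : X ◁ G ≫ (α_ X X X).inv ≫ (m ▷ X) = (α_ X X X).inv ≫ (m ▷ X) ≫ G := by
    rw [← cancel_mono (Psi m d)]
    simp only [Category.assoc]
    rw [← Psi_act h d, ← MonoidalCategory.whiskerLeft_comp_assoc, IsIso.inv_hom_id,
      MonoidalCategory.whiskerLeft_id, Category.id_comp, Category.comp_id]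
  have coact_inv : G ≫ (X ◁ d) ≫ (α_ X X X).inv = (X ◁ d) ≫ (α_ X X X).inv ≫ G ▷ X := by
    rw [← cancel_epi (Psi m d), IsIso.hom_inv_id_assoc, reassoc_of% (sh'_coact h),
      ← comp_whiskerRight, IsIso.hom_inv_id, id_whiskerRight, Category.comp_id]
  have PsiG : ∀ f : X ⟶ X ⊗ X, Psi m (f ≫ G) = Psi m f ≫ G := by
    intro f
    rw [Psi, Psi, MonoidalCategory.whiskerLeft_comp, Category.assoc, act_inv]
    simp only [Category.assoc]
  have P3 : Psi m (jl u ≫ G) = G := by rw [PsiG, Psi_jl h, Category.id_comp]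
  have P1 : d ≫ G = jl u := by
    conv_lhs => rw [← jl_Psi h d]
    rw [Category.assoc, IsIso.hom_inv_id, Category.comp_id]
  have P2 : (jl u ≫ G) ≫ Psi m d = jl u := by
    rw [Category.assoc, IsIso.inv_hom_id, Category.comp_id]
  have P4 : (jl u ≫ G) ≫ (X ◁ d) ≫ (α_ X X X).inv = d ≫ (jl u ≫ G) ▷ X := by
    rw [Category.assoc, coact_inv, reassoc_of% (jl_coact' u d), ← comp_whiskerRight]
  have E6 : jl u ≫ G = d ≫ (((jl u ≫ G) ≫ (X ◁ e) ≫ (ρ_ X).hom) ▷ X) := by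
    conv_lhs => rw [← Category.comp_id (jl u ≫ G), ← counit_kill_left h]
    simp only [Category.assoc]
    rw [reassoc_of% P4, ← comp_whiskerRight, ← comp_whiskerRight]
    simp only [Category.assoc]
  refine ⟨(jl u ≫ G) ≫ (X ◁ e) ≫ (ρ_ X).hom, ?_, ?_⟩
  · have key : d ≫ ((jl u ≫ G) ≫ m) ▷ X = (λ_ X).inv ≫ (u ▷ X) := by
      rw [comp_whiskerRight, ← Category.assoc, ← P4]
      simp only [Category.assoc]
      have : (X ◁ d) ≫ (α_ X X X).inv ≫ (m ▷ X) = Psi m d := rfl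
      rw [this, ← Category.assoc, P2, jl]
    have E5 : (jl u ≫ G) ≫ m = e ≫ u := ext_left h key
    rw [← Category.assoc, ← E6]
    exact E5
  · have c := clm_left h ((jl u ≫ G) ≫ (X ◁ e) ≫ (ρ_ X).hom)
    rw [← E6, P3] at c
    rw [reassoc_of% P1, jl_counit'] at c
    exact c.symm


lemma isIso_Psi_of_antipode (S : X ⟶ X) (hl : d ≫ (S ▷ X) ≫ m = e ≫ u)
    (hr : d ≫ (X ◁ S) ≫ m = e ≫ u) : IsIso (Psi m d) := by
  have r1 : d ≫ Psi m (d ≫ (S ▷ X)) = jl u := by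
    rw [Psi, MonoidalCategory.whiskerLeft_comp]
    slice_lhs 3 4 => rw [associator_inv_naturality_middle]
    simp only [Category.assoc]
    rw [reassoc_of% h.coassoc, Iso.hom_inv_id_assoc, ← comp_whiskerRight, ← comp_whiskerRight]
    try simp only [Category.assoc]
    rw [hr, comp_whiskerRight, reassoc_of% h.counit_comul, jl]
  have r2 : (d ≫ (S ▷ X)) ≫ Psi m d = jl u := by
    rw [Psi]
    simp only [Category.assoc]
    rw [← whisker_exchange_assoc]
    slice_lhs 3 4 => rw [associator_inv_naturality_left]
    simp only [Category.assoc]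
    rw [reassoc_of% h.coassoc, Iso.hom_inv_id_assoc, ← comp_whiskerRight, ← comp_whiskerRight]
    try simp only [Category.assoc]
    rw [hl, comp_whiskerRight, reassoc_of% h.counit_comul, jl]
  refine ⟨Psi m (d ≫ (S ▷ X)), ?_, ?_⟩
  · rw [Psi_comp h, r1, Psi_jl h]
  · rw [Psi_comp h, r2, Psi_jl h]

lemma isIso_Phi_of_antipode (S : X ⟶ X) (hl : d ≫ (S ▷ X) ≫ m = e ≫ u)
    (hr : d ≫ (X ◁ S) ≫ m = e ≫ u) : IsIso (Phi m d) := by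
  have s1 : d ≫ Phi m (d ≫ (X ◁ S)) = jr u := by
    rw [Phi, comp_whiskerRight]
    slice_lhs 3 4 => rw [associator_naturality_middle]
    simp only [Category.assoc]
    rw [← reassoc_of% h.coassoc, ← MonoidalCategory.whiskerLeft_comp,
      ← MonoidalCategory.whiskerLeft_comp]
    try simp only [Category.assoc]
    rw [hl, MonoidalCategory.whiskerLeft_comp, reassoc_of% h.comul_counit, jr]
  have s2 : (d ≫ (X ◁ S)) ≫ Phi m d = jr u := by
    rw [Phi]
    simp only [Category.assoc]
    rw [whisker_exchange_assoc]
    slice_lhs 3 4 => rw [associator_naturality_right]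
    simp only [Category.assoc]
    rw [← reassoc_of% h.coassoc, ← MonoidalCategory.whiskerLeft_comp,
      ← MonoidalCategory.whiskerLeft_comp]
    try simp only [Category.assoc]
    rw [hr, MonoidalCategory.whiskerLeft_comp, reassoc_of% h.comul_counit, jr]
  refine ⟨Phi m (d ≫ (X ◁ S)), ?_, ?_⟩
  · rw [Phi_comp h, s1, Phi_jr h]
  · rw [Phi_comp h, s2, Phi_jr h]

theorem isIso_Phi_iff_isIso_Psi : IsIso (Phi m d) ↔ IsIso (Psi m d) := by
  constructor
  · intro hi
    obtain ⟨S, hl, hr⟩ := exists_antipode_right h hi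
    exact isIso_Psi_of_antipode h S hl hr
  · intro hi
    obtain ⟨S, hl, hr⟩ := exists_antipode_left h hi
    exact isIso_Phi_of_antipode h S hl hr

end Main

section Braided
variable [BraidedCategory C]

lemma yb_inv (X : C) : ((β_ X X).inv ▷ X) ≫ (β_ X (X ⊗ X)).inv ≫ (α_ X X X).inv =
    (α_ X X X).hom ≫ (X ◁ (β_ X X).inv) ≫ (β_ (X ⊗ X) X).inv := by
  have yb := congrArg Iso.inv (yang_baxter_iso X X X)
  simp only [Iso.trans_inv, Iso.symm_inv, whiskerRightIso_inv, whiskerLeftIso_inv,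
    Iso.symm_hom, Category.assoc] at yb
  simp only [braiding_tensor_left_inv, braiding_tensor_right_inv, Category.assoc,
    Iso.hom_inv_id_assoc, Iso.inv_hom_id_assoc]
  rw [← cancel_mono (α_ X X X).hom, ← cancel_epi (α_ X X X).inv]
  simp only [Category.assoc, Iso.inv_hom_id, Category.comp_id, Iso.inv_hom_id_assoc,
    Iso.hom_inv_id_assoc]
  simpa using yb

variable {m : X ⊗ X ⟶ X} {u : 𝟙_ C ⟶ X} {d : X ⟶ X ⊗ X} {e : X ⟶ 𝟙_ C}

lemma Axioms.braidedOp (h : Axioms m u d e) : Axioms ((β_ X X).inv ≫ m) u d e where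
  assoc := by
    have h' : (X ◁ m) ≫ m = (α_ X X X).inv ≫ (m ▷ X) ≫ m := by
      rw [h.assoc, Iso.inv_hom_id_assoc]
    rw [comp_whiskerRight, MonoidalCategory.whiskerLeft_comp]
    simp only [Category.assoc]
    rw [braiding_inv_naturality_left_assoc, braiding_inv_naturality_right_assoc,
      h', reassoc_of% (yb_inv X)]
  one_mul := by
    rw [← Category.assoc, braiding_inv_naturality_left, Category.assoc, h.mul_one]
    simp
  mul_one := by
    rw [← Category.assoc, braiding_inv_naturality_right, Category.assoc, h.one_mul]
    simp
  coassoc := h.coassoc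
  counit_comul := h.counit_comul
  comul_counit := h.comul_counit

lemma coshear'_eq (m : X ⊗ X ⟶ X) (d : X ⟶ X ⊗ X) :
    (X ◁ d) ≫ (α_ X X X).inv ≫ ((β_ X X).hom ▷ X) ≫ (α_ X X X).hom ≫ (X ◁ m) =
      (β_ X X).hom ≫ Phi ((β_ X X).inv ≫ m) d := by
  rw [Phi, MonoidalCategory.whiskerLeft_comp, ← braiding_naturality_right_assoc,
    braiding_tensor_right_hom]
  simp

lemma coshear_eq (m : X ⊗ X ⟶ X) (d : X ⟶ X ⊗ X) :
    (d ▷ X) ≫ (α_ X X X).hom ≫ (X ◁ (β_ X X).hom) ≫ (α_ X X X).inv ≫ (m ▷ X) =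
      (β_ X X).hom ≫ Psi ((β_ X X).inv ≫ m) d := by
  rw [Psi, comp_whiskerRight, ← braiding_naturality_left_assoc, braiding_tensor_left_hom]
  simp

lemma isIso_braid_comp_iff {Y : C} (f : X ⊗ X ⟶ Y) :
    IsIso ((β_ X X).hom ≫ f) ↔ IsIso f :=
  ⟨fun _ => IsIso.of_isIso_comp_left (β_ X X).hom f, fun _ => inferInstance⟩

end Braided
end BimonShearAux

variable {C : Type u} [Category.{v} C] [MonoidalCategory C] [BraidedCategory C]

open BimonShearAux in
theorem Bimon_.isIso_shear_iff_and_isIso_coshear_iff' (B : Bimon_ C) :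
    (IsIso ((B.comon.comul.hom ▷ B.X.X) ≫ (α_ B.X.X B.X.X B.X.X).hom ≫ (B.X.X ◁ (MonObj.mul : B.X.X ⊗ B.X.X ⟶ B.X.X))) ↔
      IsIso ((B.X.X ◁ B.comon.comul.hom) ≫ (α_ B.X.X B.X.X B.X.X).inv ≫ ((MonObj.mul : B.X.X ⊗ B.X.X ⟶ B.X.X) ▷ B.X.X))) ∧
    (IsIso ((B.comon.comul.hom ▷ B.X.X) ≫ (α_ B.X.X B.X.X B.X.X).hom ≫
        (B.X.X ◁ (β_ B.X.X B.X.X).hom) ≫ (α_ B.X.X B.X.X B.X.X).inv ≫ ((MonObj.mul : B.X.X ⊗ B.X.X ⟶ B.X.X) ▷ B.X.X)) ↔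
      IsIso ((B.X.X ◁ B.comon.comul.hom) ≫ (α_ B.X.X B.X.X B.X.X).inv ≫
        ((β_ B.X.X B.X.X).hom ▷ B.X.X) ≫ (α_ B.X.X B.X.X B.X.X).hom ≫ (B.X.X ◁ (MonObj.mul : B.X.X ⊗ B.X.X ⟶ B.X.X)))) := by
  have hax : Axioms (MonObj.mul : B.X.X ⊗ B.X.X ⟶ B.X.X) (MonObj.one : 𝟙_ C ⟶ B.X.X) B.comon.comul.hom B.comon.counit.hom := by
    constructor
    · exact MonObj.mul_assoc B.X.X
    · exact MonObj.one_mul B.X.X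
    · exact MonObj.mul_one B.X.X
    · have := congrArg Mon.Hom.hom (@ComonObj.comul_assoc _ _ _ B.X B.comon)
      simp only [Mon.comp_hom', Mon.whiskerLeft_hom, Mon.whiskerRight_hom,
        Mon.associator_hom_hom] at this
      exact this
    · have := congrArg Mon.Hom.hom (@ComonObj.counit_comul _ _ _ B.X B.comon)
      simp only [Mon.comp_hom', Mon.whiskerLeft_hom, Mon.whiskerRight_hom,
        Mon.leftUnitor_inv_hom] at this
      exact this
    · have := congrArg Mon.Hom.hom (@ComonObj.comul_counit _ _ _ B.X B.comon)
      simp only [Mon.comp_hom', Mon.whiskerLeft_hom, Mon.whiskerRight_hom,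
        Mon.rightUnitor_inv_hom] at this
      exact this
  constructor
  · exact isIso_Phi_iff_isIso_Psi hax
  · rw [coshear_eq (MonObj.mul : B.X.X ⊗ B.X.X ⟶ B.X.X) B.comon.comul.hom, coshear'_eq (MonObj.mul : B.X.X ⊗ B.X.X ⟶ B.X.X) B.comon.comul.hom,
      isIso_braid_comp_iff, isIso_braid_comp_iff]
    exact (isIso_Phi_iff_isIso_Psi hax.braidedOp).symm

/-- For a bimonoid `B` in a braided monoidal category:
(i) the shear morphism is an isomorphism iff the reversed shear morphism is; and
(ii) the coshear morphism is an isomorphism iff the reversed coshear morphism is. -/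
theorem Bimon_.isIso_shear_iff_and_isIso_coshear_iff (B : Bimon_ C) :
    (IsIso B.shear ↔ IsIso B.shear') ∧ (IsIso B.coshear ↔ IsIso B.coshear') := by
  exact Bimon_.isIso_shear_iff_and_isIso_coshear_iff' B
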